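/- For every λ > 0 and every α > 1, the inequality ∑_{k=1}^∞ λ^{αk−1} · k^{1−α} / ((k−1)!)^α ≤ ∑_{k=0}^∞ λ^{αk} / (k!)^α holds. -/

import Mathlib

/-- For every `λ > 0` and `α > 1`,
`∑_{k=1}^∞ λ^{αk−1} k^{1−α}/((k−1)!)^α ≤ ∑_{k=0}^∞ λ^{αk}/(k!)^α`
(the left-hand series is re-indexed by `k ↦ k+1`). -/
theorem poisson_byproduct_inequality_one_lt_alpha (l : ℝ) (hl : 0 < l)
    (α : ℝ) (hα : 1 < α) :
    (∑' k : ℕ, l ^ (α * ((k : ℝ) + 1) - 1) * ((k : ℝ) + 1) ^ (1 - α)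
        / (Nat.factorial k : ℝ) ^ α)
      ≤ ∑' k : ℕ, l ^ (α * (k : ℝ)) / (Nat.factorial k : ℝ) ^ α := by
  set x : ℕ → ℝ := fun k => l ^ (k : ℝ) / (Nat.factorial k : ℝ) with hx
  set f : ℕ → ℝ := fun k => l ^ (α * (k : ℝ)) / (Nat.factorial k : ℝ) ^ α with hf
  have hα0 : (0:ℝ) < α := lt_trans one_pos hα
  have hfacpos : ∀ k : ℕ, (0 : ℝ) < (Nat.factorial k : ℝ) := fun k => by
    exact_mod_cast Nat.factorial_pos k
  have hxpos : ∀ k, 0 < x k := fun k =>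
    div_pos (Real.rpow_pos_of_pos hl _) (hfacpos k)
  have hfx : ∀ k, f k = x k ^ α := by
    intro k
    rw [hf, hx]
    simp only
    rw [Real.div_rpow (Real.rpow_pos_of_pos hl _).le (hfacpos k).le,
      ← Real.rpow_mul hl.le, mul_comm (k:ℝ) α]
  have hfpos : ∀ k, 0 < f k := fun k => by
    rw [hfx]; exact Real.rpow_pos_of_pos (hxpos k) _
  -- the LHS term equals x k * (x (k+1)) ^ (α - 1)
  have hterm : ∀ k : ℕ, l ^ (α * ((k : ℝ) + 1) - 1) * ((k : ℝ) + 1) ^ (1 - α)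
        / (Nat.factorial k : ℝ) ^ α = x k * x (k+1) ^ (α - 1) := by
    intro k
    have hk1 : (0:ℝ) < (k:ℝ) + 1 := by positivity
    obtain ⟨u, hu⟩ : ∃ u, l = Real.exp u := ⟨Real.log l, (Real.exp_log hl).symm⟩
    obtain ⟨v, hv⟩ : ∃ v, (k:ℝ) + 1 = Real.exp v :=
      ⟨Real.log _, (Real.exp_log hk1).symm⟩
    obtain ⟨w, hw⟩ : ∃ w, (Nat.factorial k : ℝ) = Real.exp w :=
      ⟨Real.log _, (Real.exp_log (hfacpos k)).symm⟩
    have hfs : ((Nat.factorial (k+1) : ℝ)) = Real.exp (v + w) := by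
      push_cast [Nat.factorial_succ, Real.exp_add, ← hv, ← hw]; ring
    rw [hx]
    simp only [hfs]
    push_cast
    rw [show ((k:ℝ) + 1) ^ (1 - α) = Real.exp (v * (1 - α)) by
      rw [hv, ← Real.exp_mul], hw, hu]
    simp only [← Real.exp_mul, ← Real.exp_sub, ← Real.exp_add, Real.exp_eq_exp]
    ring
  have hterm' : (∑' k : ℕ, l ^ (α * ((k : ℝ) + 1) - 1) * ((k : ℝ) + 1) ^ (1 - α)
        / (Nat.factorial k : ℝ) ^ α) = ∑' k, x k * x (k+1) ^ (α - 1) :=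
    tsum_congr hterm
  rw [hterm']
  have hne : α - 1 ≠ 0 := sub_ne_zero.2 (ne_of_gt hα)
  -- Young's inequality bound on each term
  have hconj : α.HolderConjugate (α / (α - 1)) := Real.HolderConjugate.conjExponent hα
  have hyoung : ∀ k, x k * x (k+1) ^ (α - 1) ≤ f k / α + (α - 1) / α * f (k+1) := by
    intro k
    have h := Real.young_inequality_of_nonneg (hxpos k).le
      (Real.rpow_pos_of_pos (hxpos (k+1)) (α-1)).le hconj
    have h2 : (x (k+1) ^ (α-1)) ^ (α / (α - 1)) = x (k+1) ^ α := by
      rw [← Real.rpow_mul (hxpos (k+1)).le]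
      congr 1
      field_simp
    rw [h2] at h
    refine h.trans_eq ?_
    rw [hfx, hfx, div_div_eq_mul_div]
    ring
  -- summability
  have hfsummable : Summable f := by
    refine Summable.of_nonneg_of_le (fun k => (hfpos k).le) (fun k => ?_)
      (Real.summable_pow_div_factorial (l ^ α))
    have h1 : f k = (l ^ α) ^ k / (Nat.factorial k : ℝ) ^ α := by
      rw [hf]
      simp only
      rw [← Real.rpow_natCast (l ^ α) k, ← Real.rpow_mul hl.le]
    rw [h1]
    apply div_le_div_of_nonneg_left (by positivity) (hfacpos k)
    calc (Nat.factorial k : ℝ) = (Nat.factorial k : ℝ) ^ (1:ℝ) := (Real.rpow_one _).symm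
      _ ≤ (Nat.factorial k : ℝ) ^ α := Real.rpow_le_rpow_of_exponent_le
          (by exact_mod_cast Nat.one_le_iff_ne_zero.2 (Nat.factorial_ne_zero k)) hα.le
  have hfs' : Summable (fun k => f (k+1)) := (summable_nat_add_iff 1).2 hfsummable
  have hgsummable : Summable (fun k => f k / α + (α-1)/α * f (k+1)) :=
    (hfsummable.div_const α).add (hfs'.mul_left _)
  have hasummable : Summable (fun k => x k * x (k+1) ^ (α-1)) :=
    Summable.of_nonneg_of_le (fun k => by positivity) hyoung hgsummable
  have hshift : (∑' k, f (k+1)) ≤ ∑' k, f k :=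
    Summable.tsum_le_tsum_of_inj (fun n => n+1) (add_left_injective 1)
      (fun c _ => (hfpos c).le) (fun k => le_rfl) hfs' hfsummable
  calc (∑' k, x k * x (k+1) ^ (α-1))
      ≤ ∑' k, (f k / α + (α-1)/α * f (k+1)) :=
        Summable.tsum_le_tsum hyoung hasummable hgsummable
    _ = (∑' k, f k) / α + (α-1)/α * ∑' k, f (k+1) := by
        rw [Summable.tsum_add (hfsummable.div_const α) (hfs'.mul_left _), tsum_div_const,
          tsum_mul_left]
    _ ≤ (∑' k, f k) / α + (α-1)/α * ∑' k, f k := by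
        gcongr
    _ = ∑' k, f k := by field_simp; ring
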